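/- arXiv:1409.4074 — 2 statements merged into one kernel-verified Lean document; each statement's English description precedes it below -/
import Mathlib

section
/- If q ≠ 0 then each bowling-ball matrix M_i is invertible, with inverse M_i^{-1} = q^{-1}·(M_i + (q − 1)·I); that is, M_i · (q^{-1}·(M_i + (q−1)·I)) = I and (q^{-1}·(M_i + (q−1)·I)) · M_i = I. -/
open Matrix

/-- The tuple `u` with the entries in positions `i` and `i+1` interchanged
(0-indexed; returns `u` unchanged if `i+1` is out of range). -/
def swapTup (n N : ℕ) (i : ℕ) (u : Fin n → Fin (N + 1)) : Fin n → Fin (N + 1) :=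
  if h : i + 1 < n then u ∘ Equiv.swap ⟨i, Nat.lt_of_succ_lt h⟩ ⟨i + 1, h⟩ else u

/-- Jones's bowling-ball matrix `M_i` (0-indexed: `i` ranges over `0,…,n-2`,
corresponding to the lanes `i+1` and `i+2` in 1-indexed notation; it is the
identity matrix out of range).  Rows and columns are indexed by the tuples
`u : Fin n → Fin (N+1)` recording the number of balls in each lane:
`M_i e_u = e_{s_i u}` if `u i ≤ u (i+1)`, and
`M_i e_u = q • e_{s_i u} + (1-q) • e_u` if `u i > u (i+1)`. -/
def bowlM (F : Type*) [Field F] (q : F) (n N : ℕ) (i : ℕ) :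
    Matrix (Fin n → Fin (N + 1)) (Fin n → Fin (N + 1)) F :=
  if h : i + 1 < n then
    Matrix.of fun v u =>
      if u ⟨i, Nat.lt_of_succ_lt h⟩ ≤ u ⟨i + 1, h⟩ then
        (if v = swapTup n N i u then 1 else 0)
      else
        q * (if v = swapTup n N i u then 1 else 0) + (1 - q) * (if v = u then 1 else 0)
  else 1

section Aux

variable {F : Type*} [Field F] {q : F} {n N i : ℕ}

lemma swapTup_swapTup (n N i : ℕ) (u : Fin n → Fin (N + 1)) :
    swapTup n N i (swapTup n N i u) = u := by
  unfold swapTup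
  split
  · funext x; simp
  · rfl

lemma swapTup_fst (hi : i + 1 < n) (u : Fin n → Fin (N + 1)) :
    swapTup n N i u ⟨i, Nat.lt_of_succ_lt hi⟩ = u ⟨i + 1, hi⟩ := by
  simp [swapTup, dif_pos hi]

lemma swapTup_snd (hi : i + 1 < n) (u : Fin n → Fin (N + 1)) :
    swapTup n N i u ⟨i + 1, hi⟩ = u ⟨i, Nat.lt_of_succ_lt hi⟩ := by
  simp [swapTup, dif_pos hi]

lemma swapTup_eq_self (hi : i + 1 < n) (u : Fin n → Fin (N + 1))
    (h : u ⟨i, Nat.lt_of_succ_lt hi⟩ = u ⟨i + 1, hi⟩) : swapTup n N i u = u := by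
  funext x
  simp only [swapTup, dif_pos hi, Function.comp_apply, Equiv.swap_apply_def]
  split_ifs with h1 h2
  · rw [h1]; exact h.symm
  · rw [h2]; exact h
  · rfl

/-- Entry function of the bowling-ball matrix (in range). -/
def bowlE (F : Type*) [Field F] (q : F) (n N i : ℕ) (hi : i + 1 < n)
    (v u : Fin n → Fin (N + 1)) : F :=
  if u ⟨i, Nat.lt_of_succ_lt hi⟩ ≤ u ⟨i + 1, hi⟩ then
    (if v = swapTup n N i u then 1 else 0)
  else
    q * (if v = swapTup n N i u then 1 else 0) + (1 - q) * (if v = u then 1 else 0)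

lemma bowlM_eq (hi : i + 1 < n) :
    bowlM F q n N i = Matrix.of (bowlE F q n N i hi) := by
  rw [bowlM, dif_pos hi]; rfl

lemma bowlE_of_le (hi : i + 1 < n) {w : Fin n → Fin (N + 1)}
    (hw : w ⟨i, Nat.lt_of_succ_lt hi⟩ ≤ w ⟨i + 1, hi⟩) (v : Fin n → Fin (N + 1)) :
    bowlE F q n N i hi v w = if v = swapTup n N i w then 1 else 0 :=
  if_pos hw

lemma bowlE_of_gt (hi : i + 1 < n) {w : Fin n → Fin (N + 1)}
    (hw : ¬ w ⟨i, Nat.lt_of_succ_lt hi⟩ ≤ w ⟨i + 1, hi⟩) (v : Fin n → Fin (N + 1)) :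
    bowlE F q n N i hi v w =
      q * (if v = swapTup n N i w then 1 else 0) + (1 - q) * (if v = w then 1 else 0) :=
  if_neg hw

lemma bowlM_sq (hi : i + 1 < n) :
    bowlM F q n N i * bowlM F q n N i
      = q • (1 : Matrix (Fin n → Fin (N + 1)) (Fin n → Fin (N + 1)) F)
        + (1 - q) • bowlM F q n N i := by
  rw [bowlM_eq hi]
  ext v w
  rw [Matrix.mul_apply]
  simp only [Matrix.add_apply, Matrix.smul_apply, Matrix.one_apply, Matrix.of_apply,
    smul_eq_mul]
  by_cases hw : w ⟨i, Nat.lt_of_succ_lt hi⟩ ≤ w ⟨i + 1, hi⟩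
  · have hcol : ∀ u, bowlE F q n N i hi u w = if u = swapTup n N i w then 1 else 0 :=
      fun u => bowlE_of_le hi hw u
    simp only [hcol, mul_ite, mul_one, mul_zero]
    rw [Finset.sum_ite_eq' Finset.univ (swapTup n N i w) (bowlE F q n N i hi v),
      if_pos (Finset.mem_univ _)]
    rcases eq_or_lt_of_le hw with heq | hlt
    · have hsw : swapTup n N i w = w := swapTup_eq_self hi w heq
      rw [hsw, bowlE_of_le hi hw v, hsw]
      split_ifs <;> ring
    · have hsw : ¬ (swapTup n N i w) ⟨i, Nat.lt_of_succ_lt hi⟩ ≤ (swapTup n N i w) ⟨i + 1, hi⟩ := by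
        rw [swapTup_fst hi, swapTup_snd hi]
        exact not_le_of_gt hlt
      rw [bowlE_of_gt hi hsw v, swapTup_swapTup]
      split_ifs <;> ring
  · have hcol : ∀ u, bowlE F q n N i hi u w =
        q * (if u = swapTup n N i w then 1 else 0) + (1 - q) * (if u = w then 1 else 0) :=
      fun u => bowlE_of_gt hi hw u
    simp only [hcol, mul_add, mul_ite, mul_one, mul_zero]
    rw [Finset.sum_add_distrib,
      Finset.sum_ite_eq' Finset.univ (swapTup n N i w)
        (fun u => bowlE F q n N i hi v u * q),
      Finset.sum_ite_eq' Finset.univ w (fun u => bowlE F q n N i hi v u * (1 - q)),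
      if_pos (Finset.mem_univ _), if_pos (Finset.mem_univ _)]
    have hlt : w ⟨i + 1, hi⟩ < w ⟨i, Nat.lt_of_succ_lt hi⟩ := lt_of_not_ge hw
    have hsw : (swapTup n N i w) ⟨i, Nat.lt_of_succ_lt hi⟩ ≤ (swapTup n N i w) ⟨i + 1, hi⟩ := by
      rw [swapTup_fst hi, swapTup_snd hi]
      exact le_of_lt hlt
    rw [bowlE_of_le hi hsw v, swapTup_swapTup, hcol v]
    split_ifs <;> ring

end Aux

/-- **Invertibility of the bowling-ball matrices when `q ≠ 0`.**
For every index `i` (0-indexed, so `i+1 < n` corresponds to `1 ≤ i ≤ n-1`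
in 1-indexed notation), if `q ≠ 0` then `M_i` is invertible with inverse
`q⁻¹ · (M_i + (q − 1) · I)`. -/
theorem bowlM_invertible (F : Type*) [Field F] (q : F) (n N : ℕ)
    (hn : 2 ≤ n) (hN : 1 ≤ N) (hq : q ≠ 0) (i : ℕ) (hi : i + 1 < n) :
    bowlM F q n N i *
        (q⁻¹ • (bowlM F q n N i + (q - 1) • (1 : Matrix (Fin n → Fin (N + 1)) (Fin n → Fin (N + 1)) F))) = 1 ∧
      (q⁻¹ • (bowlM F q n N i + (q - 1) • (1 : Matrix (Fin n → Fin (N + 1)) (Fin n → Fin (N + 1)) F))) *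
        bowlM F q n N i = 1 := by
  have hsq := bowlM_sq (F := F) (q := q) (N := N) hi
  set M := bowlM F q n N i with hM
  have hX : M * M + (q - 1) • M = q • (1 : Matrix (Fin n → Fin (N + 1)) (Fin n → Fin (N + 1)) F) := by
    rw [hsq, add_assoc, ← add_smul]
    norm_num
  constructor
  · rw [Matrix.mul_smul, Matrix.mul_add, Matrix.mul_smul, Matrix.mul_one, hX, smul_smul,
      inv_mul_cancel₀ hq, one_smul]
  · rw [Matrix.smul_mul, Matrix.add_mul, Matrix.smul_mul, Matrix.one_mul, hX, smul_smul,
      inv_mul_cancel₀ hq, one_smul]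
end

section
/- The alternating sum annihilates weakly increasing basis vectors: suppose n ≥ N + 2. If u ∈ S is weakly increasing, i.e. u_1 ≤ u_2 ≤ ⋯ ≤ u_n, then ( ∑_{w ∈ S_n} sgn(w)·P_w ) e_u = 0, where P_w = M_{i_1}⋯M_{i_ℓ} for any reduced word (i_1,…,i_ℓ) of w and sgn(w) = ±1 is the sign of w viewed in F. -/
open Matrix

/-- The adjacent transposition `s_i = (i, i+1)` of `Fin n`
(0-indexed; the identity permutation out of range). -/
def adjSwap (n : ℕ) (i : ℕ) : Equiv.Perm (Fin n) :=
  if h : i + 1 < n then Equiv.swap ⟨i, Nat.lt_of_succ_lt h⟩ ⟨i + 1, h⟩ else 1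

/-- The number of inversions of a permutation `w` of `Fin n`:
the number of pairs `i < j` with `w j < w i`. -/
def inversions (n : ℕ) (w : Equiv.Perm (Fin n)) : ℕ :=
  (Finset.univ.filter fun p : Fin n × Fin n => p.1 < p.2 ∧ w p.2 < w p.1).card

/-- A list `l` of indices (0-indexed, each in `{0, …, n-2}`) is a reduced word
for the permutation `w` if `w` is the composite of the corresponding adjacent
transpositions and the length of `l` equals the number of inversions of `w`. -/
def IsReducedWord (n : ℕ) (w : Equiv.Perm (Fin n)) (l : List ℕ) : Prop :=
  (∀ i ∈ l, i + 1 < n) ∧ (l.map (adjSwap n)).prod = w ∧ l.length = inversions n w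

/-- The product `M_{i_1} ⋯ M_{i_ℓ}` of bowling-ball matrices along a word. -/
def prodBowlM (F : Type*) [Field F] (q : F) (n N : ℕ) (l : List ℕ) :
    Matrix (Fin n → Fin (N + 1)) (Fin n → Fin (N + 1)) F :=
  (l.map (bowlM F q n N)).prod


section Aux
variable {n : ℕ}

variable {n : ℕ}

lemma adjSwap_of_lt {i : ℕ} (h : i + 1 < n) :
    adjSwap n i = Equiv.swap ⟨i, Nat.lt_of_succ_lt h⟩ ⟨i + 1, h⟩ := dif_pos h

lemma fin_ne {i : ℕ} (h : i + 1 < n) :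
    (⟨i, Nat.lt_of_succ_lt h⟩ : Fin n) ≠ ⟨i + 1, h⟩ := by
  simp [Fin.ext_iff]

lemma swap_lt_swap_iff {i : ℕ} (h : i + 1 < n) {c d : Fin n}
    (h1 : ¬(c = ⟨i, Nat.lt_of_succ_lt h⟩ ∧ d = ⟨i + 1, h⟩))
    (h2 : ¬(d = ⟨i, Nat.lt_of_succ_lt h⟩ ∧ c = ⟨i + 1, h⟩)) :
    Equiv.swap (⟨i, Nat.lt_of_succ_lt h⟩ : Fin n) ⟨i + 1, h⟩ c <
      Equiv.swap (⟨i, Nat.lt_of_succ_lt h⟩ : Fin n) ⟨i + 1, h⟩ d ↔ c < d := by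
  rcases c with ⟨c, hcn⟩; rcases d with ⟨d, hdn⟩
  simp only [Fin.mk.injEq] at h1 h2
  simp only [Equiv.swap_apply_def, Fin.mk.injEq]
  split_ifs <;> simp only [Fin.mk_lt_mk] <;> omega

lemma inversions_swapMul {i : ℕ} (h : i + 1 < n) (τ : Equiv.Perm (Fin n))
    (hab : τ⁻¹ ⟨i, Nat.lt_of_succ_lt h⟩ < τ⁻¹ ⟨i + 1, h⟩) :
    inversions n (adjSwap n i * τ) = inversions n τ + 1 := by
  classical
  have hτa : τ (τ⁻¹ ⟨i, Nat.lt_of_succ_lt h⟩) = ⟨i, Nat.lt_of_succ_lt h⟩ :=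
    Equiv.apply_symm_apply τ _
  have hτb : τ (τ⁻¹ ⟨i + 1, h⟩) = ⟨i + 1, h⟩ := Equiv.apply_symm_apply τ _
  have hij : (⟨i, Nat.lt_of_succ_lt h⟩ : Fin n) < ⟨i + 1, h⟩ := by simp [Fin.lt_def]
  have key : ∀ p : Fin n × Fin n, p ≠ (τ⁻¹ ⟨i, Nat.lt_of_succ_lt h⟩, τ⁻¹ ⟨i + 1, h⟩) →
      (if p.1 < p.2 ∧ (adjSwap n i * τ) p.2 < (adjSwap n i * τ) p.1 then 1 else 0) =
      (if p.1 < p.2 ∧ τ p.2 < τ p.1 then (1 : ℕ) else 0) := by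
    intro p hp
    by_cases hlt : p.1 < p.2
    · have e : (adjSwap n i) (τ p.2) < (adjSwap n i) (τ p.1) ↔ τ p.2 < τ p.1 := by
        rw [adjSwap_of_lt h]
        apply swap_lt_swap_iff h
        · rintro ⟨h1, h2⟩
          have e2 : p.2 = τ⁻¹ ⟨i, Nat.lt_of_succ_lt h⟩ := τ.injective (by rw [hτa, h1])
          have e1 : p.1 = τ⁻¹ ⟨i + 1, h⟩ := τ.injective (by rw [hτb, h2])
          rw [e1, e2] at hlt
          exact absurd hab (not_lt.2 hlt.le)
        · rintro ⟨h1, h2⟩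
          have e1 : p.1 = τ⁻¹ ⟨i, Nat.lt_of_succ_lt h⟩ := τ.injective (by rw [hτa, h1])
          have e2 : p.2 = τ⁻¹ ⟨i + 1, h⟩ := τ.injective (by rw [hτb, h2])
          exact hp (Prod.ext e1 e2)
      simp only [Equiv.Perm.mul_apply]
      simp [hlt, e]
    · simp [hlt]
  have e1 : inversions n (adjSwap n i * τ) =
      ∑ p : Fin n × Fin n, if p.1 < p.2 ∧ (adjSwap n i * τ) p.2 < (adjSwap n i * τ) p.1
        then 1 else 0 := Finset.card_filter _ _
  have e2 : inversions n τ =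
      ∑ p : Fin n × Fin n, if p.1 < p.2 ∧ τ p.2 < τ p.1 then 1 else 0 :=
    Finset.card_filter _ _
  rw [e1, e2,
    ← Finset.add_sum_erase _ _ (Finset.mem_univ (τ⁻¹ ⟨i, Nat.lt_of_succ_lt h⟩, τ⁻¹ ⟨i + 1, h⟩)),
    ← Finset.add_sum_erase _ _ (Finset.mem_univ (τ⁻¹ ⟨i, Nat.lt_of_succ_lt h⟩, τ⁻¹ ⟨i + 1, h⟩))]
  have hs : ((adjSwap n i * τ) (τ⁻¹ ⟨i + 1, h⟩) < (adjSwap n i * τ) (τ⁻¹ ⟨i, Nat.lt_of_succ_lt h⟩)) := by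
    simp only [Equiv.Perm.mul_apply, hτa, hτb, adjSwap_of_lt h,
      Equiv.swap_apply_left, Equiv.swap_apply_right]
    exact hij
  rw [Finset.sum_congr rfl fun p hp => key p (Finset.mem_erase.1 hp).1]
  simp only [hab, hs, and_self, if_true, hτa, hτb, not_lt.2 hij.le, and_false, if_false]
  omega

lemma inversions_swapMul' {i : ℕ} (h : i + 1 < n) (τ : Equiv.Perm (Fin n))
    (hab : τ⁻¹ ⟨i + 1, h⟩ < τ⁻¹ ⟨i, Nat.lt_of_succ_lt h⟩) :
    inversions n (adjSwap n i * τ) + 1 = inversions n τ := by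
  have hsq : adjSwap n i * (adjSwap n i * τ) = τ := by
    rw [adjSwap_of_lt h, ← mul_assoc, Equiv.swap_mul_self, one_mul]
  have hcond : (adjSwap n i * τ)⁻¹ ⟨i, Nat.lt_of_succ_lt h⟩ < (adjSwap n i * τ)⁻¹ ⟨i + 1, h⟩ := by
    rw [_root_.mul_inv_rev, adjSwap_of_lt h, Equiv.swap_inv]
    simpa [Equiv.Perm.mul_apply, Equiv.swap_apply_left, Equiv.swap_apply_right] using hab
  have := inversions_swapMul h (adjSwap n i * τ) hcond
  rw [hsq] at this
  omega

lemma inversions_one : inversions n 1 = 0 := by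
  rw [inversions, Finset.card_eq_zero, Finset.filter_eq_empty_iff]
  rintro p - ⟨h1, h2⟩
  simp only [Equiv.Perm.one_apply] at h2
  exact absurd h2 (not_lt.2 h1.le)

lemma eq_one_of_inversions_eq_zero {w : Equiv.Perm (Fin n)} (hw : inversions n w = 0) :
    w = 1 := by
  have hempty := Finset.card_eq_zero.1 hw
  have hsm : StrictMono w := by
    intro x y hxy
    rcases lt_trichotomy (w x) (w y) with hc | hc | hc
    · exact hc
    · exact absurd (w.injective hc) (ne_of_lt hxy)
    · exfalso
      have : (x, y) ∈ Finset.univ.filter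
          fun p : Fin n × Fin n => p.1 < p.2 ∧ w p.2 < w p.1 := by
        simp [hxy, hc]
      rw [hempty] at this
      exact absurd this (Finset.notMem_empty _)
  have : ⇑w = id := (StrictMono.range_inj hsm strictMono_id).1
    (by rw [Set.range_id, Set.range_eq_univ]; exact w.surjective)
  exact Equiv.ext fun x => congrFun this x



lemma inversions_prod_le (l : List ℕ) (hl : ∀ i ∈ l, i + 1 < n) :
    inversions n ((l.map (adjSwap n)).prod) ≤ l.length := by
  induction l with
  | nil => simp [inversions_one]
  | cons i t ih =>
    have h : i + 1 < n := hl i (by simp)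
    have ht := ih fun j hj => hl j (List.mem_cons_of_mem _ hj)
    rw [List.map_cons, List.prod_cons]
    rcases lt_trichotomy (((t.map (adjSwap n)).prod)⁻¹ ⟨i, Nat.lt_of_succ_lt h⟩)
      (((t.map (adjSwap n)).prod)⁻¹ ⟨i + 1, h⟩) with hc | hc | hc
    · rw [inversions_swapMul h _ hc]; simpa using Nat.add_le_add_right ht 1
    · exact absurd (Equiv.injective _ hc) (fin_ne h)
    · have := inversions_swapMul' h _ hc
      simp only [List.length_cons]
      omega

lemma reduced_cons {w : Equiv.Perm (Fin n)} {i : ℕ} {t : List ℕ}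
    (hr : IsReducedWord n w (i :: t)) :
    ∃ h : i + 1 < n, IsReducedWord n ((t.map (adjSwap n)).prod) t ∧
      ((t.map (adjSwap n)).prod)⁻¹ ⟨i, Nat.lt_of_succ_lt h⟩ <
        ((t.map (adjSwap n)).prod)⁻¹ ⟨i + 1, h⟩ ∧
      w = adjSwap n i * (t.map (adjSwap n)).prod := by
  obtain ⟨hl, hp, hlen⟩ := hr
  have h : i + 1 < n := hl i (by simp)
  have hle := inversions_prod_le t fun j hj => hl j (List.mem_cons_of_mem _ hj)
  have hw : w = adjSwap n i * (t.map (adjSwap n)).prod := by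
    rw [← hp, List.map_cons, List.prod_cons]
  rcases lt_trichotomy (((t.map (adjSwap n)).prod)⁻¹ ⟨i, Nat.lt_of_succ_lt h⟩)
    (((t.map (adjSwap n)).prod)⁻¹ ⟨i + 1, h⟩) with hc | hc | hc
  · refine ⟨h, ⟨fun j hj => hl j (List.mem_cons_of_mem _ hj), rfl, ?_⟩, hc, hw⟩
    have := inversions_swapMul h _ hc
    rw [← hw] at this
    simp only [List.length_cons] at hlen
    omega
  · exact absurd (Equiv.injective _ hc) (fin_ne h)
  · exfalso
    have := inversions_swapMul' h _ hc
    rw [← hw] at this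
    simp only [List.length_cons] at hlen
    omega

lemma exists_descent {w : Equiv.Perm (Fin n)} (hn : 2 ≤ n) (hw : w ≠ 1) :
    ∃ i : ℕ, ∃ h : i + 1 < n, w ⟨i + 1, h⟩ < w ⟨i, Nat.lt_of_succ_lt h⟩ := by
  by_contra hc
  push_neg at hc
  apply hw
  obtain ⟨m, rfl⟩ : ∃ m, n = m + 1 := ⟨n - 1, by omega⟩
  have hsm : StrictMono w := by
    rw [Fin.strictMono_iff_lt_succ]
    intro i
    have h : (i : ℕ) + 1 < m + 1 := by omega
    have h1 := hc i h
    have e1 : Fin.castSucc i = (⟨(i : ℕ), Nat.lt_of_succ_lt h⟩ : Fin (m + 1)) := by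
      ext; simp
    have e2 : Fin.succ i = (⟨(i : ℕ) + 1, h⟩ : Fin (m + 1)) := by ext; simp
    rw [e1, e2]
    refine lt_of_le_of_ne h1 fun he => ?_
    exact fin_ne h (w.injective he)
  have : ⇑w = id := (StrictMono.range_inj hsm strictMono_id).1
    (by rw [Set.range_id, Set.range_eq_univ]; exact w.surjective)
  exact Equiv.ext fun x => congrFun this x

lemma exists_reducedWord (hn : 2 ≤ n) (w : Equiv.Perm (Fin n)) :
    ∃ l, IsReducedWord n w l := by
  suffices h : ∀ k (w : Equiv.Perm (Fin n)), inversions n w ≤ k → ∃ l, IsReducedWord n w l from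
    h (inversions n w) w le_rfl
  intro k
  induction k with
  | zero =>
    intro w hw
    have h1 : w = 1 := eq_one_of_inversions_eq_zero (Nat.le_zero.1 hw)
    subst h1
    exact ⟨[], fun i hi => absurd hi List.not_mem_nil, by simp, by simp [inversions_one]⟩
  | succ k ih =>
    intro w hw
    by_cases h1 : w = 1
    · subst h1
      exact ⟨[], fun i hi => absurd hi List.not_mem_nil, by simp, by simp [inversions_one]⟩
    · obtain ⟨i, h, hd⟩ := exists_descent hn (show w⁻¹ ≠ 1 by simpa using h1)
      have hcond : (adjSwap n i * w)⁻¹ ⟨i, Nat.lt_of_succ_lt h⟩ <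
          (adjSwap n i * w)⁻¹ ⟨i + 1, h⟩ := by
        rw [_root_.mul_inv_rev, adjSwap_of_lt h, Equiv.swap_inv]
        simpa [Equiv.Perm.mul_apply, Equiv.swap_apply_left, Equiv.swap_apply_right] using hd
      have hsq : adjSwap n i * (adjSwap n i * w) = w := by
        rw [adjSwap_of_lt h, ← mul_assoc, Equiv.swap_mul_self, one_mul]
      have hinv : inversions n w = inversions n (adjSwap n i * w) + 1 := by
        have := inversions_swapMul h (adjSwap n i * w) hcond
        rw [hsq] at this
        omega
      obtain ⟨t, ht1, ht2, ht3⟩ := ih (adjSwap n i * w) (by omega)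
      refine ⟨i :: t, ?_, ?_, ?_⟩
      · intro j hj
        rcases List.mem_cons.1 hj with rfl | hj
        · exact h
        · exact ht1 j hj
      · rw [List.map_cons, List.prod_cons, ht2, hsq]
      · simp only [List.length_cons, ht3]
        omega

lemma bowlM_mulVec {F : Type*} [Field F] (q : F) {N i : ℕ} (h : i + 1 < n)
    (v : Fin n → Fin (N + 1)) (hv : v ⟨i, Nat.lt_of_succ_lt h⟩ ≤ v ⟨i + 1, h⟩) :
    bowlM F q n N i *ᵥ Pi.single v 1 = Pi.single (swapTup n N i v) 1 := by
  funext x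
  rw [mulVec_single_one]
  simp only [Matrix.col_apply, bowlM, dif_pos h, Matrix.of_apply, if_pos hv, Pi.single_apply, mul_one]

lemma prodBowlM_reduced {F : Type*} [Field F] (q : F) {N : ℕ} (u : Fin n → Fin (N + 1))
    (hu : Monotone u) :
    ∀ (l : List ℕ) (w : Equiv.Perm (Fin n)), IsReducedWord n w l →
      prodBowlM F q n N l *ᵥ Pi.single u 1 = Pi.single (u ∘ ⇑w⁻¹) 1 := by
  intro l
  induction l with
  | nil =>
    intro w hw
    have h1 : w = 1 := by rw [← hw.2.1]; simp
    subst h1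
    simp only [prodBowlM, List.map_nil, List.prod_nil, Matrix.one_mulVec]
    congr 1
  | cons i t ih =>
    intro w hw
    obtain ⟨h, hred, hc, hw'⟩ := reduced_cons hw
    have hstep := ih ((t.map (adjSwap n)).prod) hred
    have hprod : prodBowlM F q n N (i :: t) = bowlM F q n N i * prodBowlM F q n N t := by
      rw [prodBowlM, List.map_cons, List.prod_cons]; rfl
    rw [hprod, ← Matrix.mulVec_mulVec, hstep]
    have hle : (u ∘ ⇑((t.map (adjSwap n)).prod)⁻¹) ⟨i, Nat.lt_of_succ_lt h⟩ ≤
        (u ∘ ⇑((t.map (adjSwap n)).prod)⁻¹) ⟨i + 1, h⟩ := hu hc.le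
    rw [bowlM_mulVec q h _ hle]
    have htup : swapTup n N i (u ∘ ⇑((t.map (adjSwap n)).prod)⁻¹) = u ∘ ⇑w⁻¹ := by
      rw [swapTup, dif_pos h, hw']
      funext x
      simp only [Function.comp_apply, adjSwap_of_lt h, _root_.mul_inv_rev, Equiv.swap_inv,
        Equiv.Perm.mul_apply]
    rw [htup]

lemma my_sum_mulVec {F : Type*} [Field F] {m : Type*} [Fintype m] [DecidableEq m]
    {ι : Type*} (s : Finset ι) (A : ι → Matrix m m F) (v : m → F) :
    (∑ i ∈ s, A i) *ᵥ v = ∑ i ∈ s, A i *ᵥ v := by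
  ext x
  simp only [Matrix.mulVec, dotProduct, Finset.sum_apply, Matrix.sum_apply,
    Finset.sum_mul]
  rw [Finset.sum_comm]


end Aux

/-- **The alternating sum annihilates weakly increasing basis vectors.**
Suppose `n ≥ N + 2` and let `P w` be the product of bowling-ball matrices
along any reduced word of `w` (the hypothesis `hP` pins down `P` since
every permutation has a reduced word).  If `u` is weakly increasing, then
`(∑_w sgn(w)·P_w) e_u = 0`. -/
theorem alternating_sum_kills_monotone (F : Type*) [Field F] (q : F) (n N : ℕ)
    (hn : 2 ≤ n) (hN : 1 ≤ N) (hnN : N + 2 ≤ n)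
    (P : Equiv.Perm (Fin n) → Matrix (Fin n → Fin (N + 1)) (Fin n → Fin (N + 1)) F)
    (hP : ∀ w l, IsReducedWord n w l → P w = prodBowlM F q n N l)
    (u : Fin n → Fin (N + 1)) (hu : Monotone u) :
    (∑ w : Equiv.Perm (Fin n), ((Equiv.Perm.sign w : ℤ) : F) • P w) *ᵥ Pi.single u 1 = 0 := by
  -- find equal adjacent values
  have hjj : ∃ j : ℕ, ∃ h : j + 1 < n, u ⟨j, Nat.lt_of_succ_lt h⟩ = u ⟨j + 1, h⟩ := by
    by_contra hc
    push_neg at hc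
    obtain ⟨m, rfl⟩ : ∃ m, n = m + 1 := ⟨n - 1, by omega⟩
    have hsm : StrictMono u := by
      rw [Fin.strictMono_iff_lt_succ]
      intro i
      have h : (i : ℕ) + 1 < m + 1 := by omega
      have h1 := hc i h
      have e1 : Fin.castSucc i = (⟨(i : ℕ), Nat.lt_of_succ_lt h⟩ : Fin (m + 1)) := by
        ext; simp
      have e2 : Fin.succ i = (⟨(i : ℕ) + 1, h⟩ : Fin (m + 1)) := by ext; simp
      rw [e1, e2]
      refine lt_of_le_of_ne (hu ?_) h1
      simp [Fin.le_def]
    have hcard := Fintype.card_le_of_injective u hsm.injective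
    simp only [Fintype.card_fin] at hcard
    omega
  obtain ⟨j, hj, hjeq⟩ := hjj
  have husj : ∀ y : Fin n, u (adjSwap n j y) = u y := by
    intro y
    rw [adjSwap_of_lt hj]
    rcases Equiv.swap_apply_def (⟨j, Nat.lt_of_succ_lt hj⟩ : Fin n) ⟨j + 1, hj⟩ y with _
    by_cases h1 : y = ⟨j, Nat.lt_of_succ_lt hj⟩
    · rw [h1, Equiv.swap_apply_left, ← hjeq]
    · by_cases h2 : y = ⟨j + 1, hj⟩
      · rw [h2, Equiv.swap_apply_right, hjeq]
      · rw [Equiv.swap_apply_of_ne_of_ne h1 h2]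
  have hterm : ∀ w : Equiv.Perm (Fin n), P w *ᵥ Pi.single u 1 = Pi.single (u ∘ ⇑w⁻¹) 1 := by
    intro w
    obtain ⟨l, hl⟩ := exists_reducedWord hn w
    rw [hP w l hl]
    exact prodBowlM_reduced q u hu l w hl
  rw [my_sum_mulVec]
  rw [Finset.sum_congr rfl fun w _ => by rw [Matrix.smul_mulVec, hterm w]]
  apply Finset.sum_ninvolution (fun w => w * adjSwap n j)
  · intro w
    have hsign : Equiv.Perm.sign (w * adjSwap n j) = -Equiv.Perm.sign w := by
      rw [Equiv.Perm.sign_mul, adjSwap_of_lt hj, Equiv.Perm.sign_swap (fin_ne hj)]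
      exact mul_neg_one _
    have hfun : u ∘ ⇑(w * adjSwap n j)⁻¹ = u ∘ ⇑w⁻¹ := by
      funext x
      simp only [Function.comp_apply, _root_.mul_inv_rev, Equiv.Perm.mul_apply]
      rw [show (adjSwap n j)⁻¹ = adjSwap n j by rw [adjSwap_of_lt hj, Equiv.swap_inv]]
      exact husj _
    rw [hsign, hfun]
    push_cast
    rw [← add_smul]
    simp
  · intro w _ hne
    have hs1 : adjSwap n j = 1 := mul_left_cancel (hne.trans (mul_one w).symm)
    rw [adjSwap_of_lt hj, Equiv.swap_eq_one_iff] at hs1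
    exact fin_ne hj hs1
  · intro w; exact Finset.mem_univ _
  · intro w
    rw [mul_assoc, adjSwap_of_lt hj, Equiv.swap_mul_self, mul_one]
end
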